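/- Let *_n be the unique left-distributive operation on {0,1,…,2^n−1} with a *_n 1 = a + 1 (mod 2^n). Then for all a, b ∈ {0,1,…,2^n−1}, either a *_n b = 0 or a *_n b > a. -/

import Mathlib

theorem stmt_12 (n : ℕ) (op : ZMod (2 ^ n) → ZMod (2 ^ n) → ZMod (2 ^ n))
    (hLD : ∀ a b c : ZMod (2 ^ n), op a (op b c) = op (op a b) (op a c))
    (hsucc : ∀ a : ZMod (2 ^ n), op a 1 = a + 1) :
    ∀ a b : ZMod (2 ^ n), op a b = 0 ∨ a.val < (op a b).val := by
  haveI : NeZero (2 ^ n) := ⟨pow_ne_zero n two_ne_zero⟩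
  have hN : (2:ℕ) ^ n = 2 ^ n := rfl
  have hNpos : 0 < 2 ^ n := Nat.two_pow_pos n
  have castval : ∀ x : ZMod (2 ^ n), ((x.val : ℕ) : ZMod (2 ^ n)) = x := fun x =>
    ZMod.natCast_rightInverse x
  have hval_lt : ∀ a : ZMod (2 ^ n), a.val < 2 ^ n := fun a => ZMod.val_lt a
  have key : ∀ a b : ZMod (2 ^ n), op a (b + 1) = op (op a b) (a + 1) := by
    intro a b
    have h := hLD a b 1
    rwa [hsucc, hsucc] at h
  have val_succ : ∀ a : ZMod (2 ^ n), a + 1 = 0 ∨ (a + 1).val = a.val + 1 := by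
    intro a
    rcases eq_or_ne (a + 1) 0 with h | h
    · exact Or.inl h
    right
    have hc : a + 1 = ((a.val + 1 : ℕ) : ZMod (2 ^ n)) := by
      push_cast [castval a]
      ring
    have hlt : a.val + 1 < 2 ^ n := by
      rcases Nat.lt_or_ge (a.val + 1) (2 ^ n) with h1 | h1
      · exact h1
      · exfalso
        have : a.val + 1 = 2 ^ n := le_antisymm (hval_lt a) h1
        apply h
        rw [hc, this, ZMod.natCast_self]
    rw [hc, ZMod.val_natCast, Nat.mod_eq_of_lt hlt]
  -- row 0 is the identity
  have row0 : ∀ b : ZMod (2 ^ n), op 0 b = b := by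
    have step : ∀ x : ZMod (2 ^ n), op 0 (x + 1) = op 0 x + 1 := by
      intro x
      rw [key, zero_add, hsucc]
    have aux : ∀ k : ℕ, op 0 ((1 : ZMod (2 ^ n)) + (k : ZMod (2 ^ n))) = 1 + (k : ZMod (2 ^ n)) := by
      intro k
      induction k with
      | zero => simpa using hsucc 0
      | succ k ih =>
        have hb : (1 : ZMod (2 ^ n)) + ((k + 1 : ℕ) : ZMod (2 ^ n)) = (1 + (k : ZMod (2 ^ n))) + 1 := by
          push_cast; ring
        rw [hb, step, ih]
    intro b
    have hb : b = 1 + (((b - 1).val : ℕ) : ZMod (2 ^ n)) := by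
      rw [castval]; ring
    rw [hb]; exact aux _
  -- the core inner induction, with the outer IH as a hypothesis
  have inner : ∀ a : ZMod (2 ^ n),
      (∀ a' : ZMod (2 ^ n), a.val < a'.val → ∀ b, op a' b = 0 ∨ a'.val < (op a' b).val) →
      ∀ b, op a b = 0 ∨ a.val < (op a b).val := by
    intro a IH
    have aux : ∀ k : ℕ, op a (1 + (k : ZMod (2 ^ n))) = 0 ∨ a.val < (op a (1 + (k : ZMod (2 ^ n)))).val := by
      intro k
      induction k with
      | zero =>
        simp only [Nat.cast_zero, add_zero]
        rw [hsucc]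
        rcases val_succ a with h | h
        · exact Or.inl h
        · right; omega
      | succ k ih =>
        have hb : (1 : ZMod (2 ^ n)) + ((k + 1 : ℕ) : ZMod (2 ^ n)) = (1 + (k : ZMod (2 ^ n))) + 1 := by
          push_cast; ring
        rw [hb, key]
        rcases ih with h | h
        · rw [h, row0]
          rcases val_succ a with h2 | h2
          · exact Or.inl h2
          · right; omega
        · rcases IH (op a (1 + (k : ZMod (2 ^ n)))) h (a + 1) with h2 | h2
          · exact Or.inl h2
          · right; exact lt_trans h h2
    intro b
    have hb : b = 1 + (((b - 1).val : ℕ) : ZMod (2 ^ n)) := by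
      rw [castval]; ring
    rw [hb]; exact aux _
  have main : ∀ t : ℕ, ∀ a : ZMod (2 ^ n), 2 ^ n - 1 - a.val ≤ t →
      ∀ b, op a b = 0 ∨ a.val < (op a b).val := by
    intro t
    induction t with
    | zero =>
      intro a ha b
      refine inner a (fun a' ha' b' => ?_) b
      exfalso
      have := hval_lt a
      have := hval_lt a'
      omega
    | succ t ih =>
      intro a ha b
      refine inner a (fun a' ha' b' => ?_) b
      refine ih a' ?_ b'
      have := hval_lt a'
      omega
  intro a b
  exact main (2 ^ n - 1 - a.val) a le_rfl b
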